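/- In the formal power series ring ℚ⟦t⟧, equipped with the topology of coefficientwise convergence (product topology, ℚ discrete), the family indexed by integers k ≥ 1 given by (φ(k)/k) • L_k, where φ is Euler's totient function and L_k ∈ ℚ⟦t⟧ is the series whose coefficient of t^m equals k/m if k divides m and m ≥ 1, and 0 otherwise (i.e. L_k = ∑_{j≥1} t^{kj}/j), has sum (HasSum) equal to the series ∑_{m≥1} t^m = t/(1−t). -/

import Mathlib

/-- The topology of coefficientwise convergence on `ℚ⟦t⟧`
(the product topology, `ℚ` being discrete). -/
noncomputable instance : TopologicalSpace (PowerSeries ℚ) :=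
  TopologicalSpace.induced (fun f k => PowerSeries.coeff k f)
    (@Pi.topologicalSpace ℕ (fun _ => ℚ) fun _ => ⊥)

/-- **Logarithmic form of `∏_{k≥1} (1-t^k)^{-φ(k)/k} = e^{t/(1-t)}`.**
The family `k ↦ (φ(k)/k) • L_k` (`k ≥ 1`), where `L_k = ∑_{j≥1} t^{kj}/j` is the series
whose coefficient of `t^m` is `k/m` if `k ∣ m`, `m ≥ 1`, and `0` otherwise, has sum
`∑_{m≥1} t^m = t/(1-t)` in `ℚ⟦t⟧`. -/
theorem hasSum_totient_div_smul_log :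
    HasSum
      (fun k : {k : ℕ // 1 ≤ k} =>
        ((Nat.totient (k : ℕ) : ℚ) / ((k : ℕ) : ℚ)) •
          (PowerSeries.mk fun m =>
            if m ≠ 0 ∧ (k : ℕ) ∣ m then (((k : ℕ) : ℚ)) / (m : ℚ) else 0))
      (PowerSeries.mk fun m => if m = 0 then 0 else (1 : ℚ)) := by
  letI : TopologicalSpace ℚ := ⊥
  haveI : DiscreteTopology ℚ := ⟨rfl⟩
  rw [HasSum, nhds_induced, Filter.tendsto_comap_iff, tendsto_pi_nhds]
  intro m
  rw [nhds_discrete ℚ, Filter.tendsto_pure]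
  rcases Nat.eq_zero_or_pos m with hm | hm
  · subst hm
    filter_upwards with s
    simp [map_sum]
  · set s₀ : Finset {k : ℕ // 1 ≤ k} := m.divisors.subtype (fun k => 1 ≤ k) with hs₀
    filter_upwards [Filter.eventually_ge_atTop s₀] with s hs
    have hm0 : m ≠ 0 := hm.ne'
    simp only [Function.comp_apply, map_sum]
    have hzero : ∀ k ∈ s, k ∉ s₀ → (PowerSeries.coeff m)
        (((Nat.totient (k : ℕ) : ℚ) / ((k : ℕ) : ℚ)) •
          (PowerSeries.mk fun m' =>
            if m' ≠ 0 ∧ (k : ℕ) ∣ m' then (((k : ℕ) : ℚ)) / (m' : ℚ) else 0)) = 0 := by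
      intro k _ hk
      simp only [PowerSeries.coeff_smul, PowerSeries.coeff_mk, smul_eq_mul]
      have : ¬ ((k : ℕ) ∣ m) := by
        intro hdvd
        apply hk
        rw [hs₀, Finset.mem_subtype, Nat.mem_divisors]
        exact ⟨hdvd, hm0⟩
      simp [this]
    rw [← Finset.sum_subset hs hzero]
    · have h1 : ∀ k ∈ s₀, (PowerSeries.coeff m)
          (((Nat.totient (k : ℕ) : ℚ) / ((k : ℕ) : ℚ)) •
            (PowerSeries.mk fun m' =>
              if m' ≠ 0 ∧ (k : ℕ) ∣ m' then (((k : ℕ) : ℚ)) / (m' : ℚ) else 0))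
          = (Nat.totient (k : ℕ) : ℚ) / (m : ℚ) := by
        intro k hk
        rw [hs₀, Finset.mem_subtype] at hk
        have hdvd : (k : ℕ) ∣ m := (Nat.mem_divisors.mp hk).1
        have hk0 : ((k : ℕ) : ℚ) ≠ 0 := by
          exact_mod_cast Nat.pos_of_ne_zero (by omega : (k : ℕ) ≠ 0) |>.ne'
        simp only [PowerSeries.coeff_smul, PowerSeries.coeff_mk, hm0, hdvd,
          ne_eq, not_false_eq_true, and_self, if_true, smul_eq_mul]
        field_simp
      rw [Finset.sum_congr rfl h1]
      rw [hs₀]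
      rw [Finset.sum_subtype_eq_sum_filter (f := fun n => (Nat.totient n : ℚ) / (m : ℚ))]
      have : Finset.filter (fun k => 1 ≤ k) m.divisors = m.divisors := by
        apply Finset.filter_true_of_mem
        intro x hx
        exact Nat.pos_of_mem_divisors hx
      rw [this, ← Finset.sum_div, ]
      have := Nat.sum_totient m
      have hcast : (∑ i ∈ m.divisors, (Nat.totient i : ℚ)) = (m : ℚ) := by
        exact_mod_cast congrArg (Nat.cast : ℕ → ℚ) this
      rw [hcast, div_self (by exact_mod_cast hm0)]
      simp [hm0]
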